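/- For the Cantor-like substitution σ with σ(1) = 1 0^{l_1} 1 0^{l_2} and σ(0) = 0^{l_3}, if μ_n denotes the number of 0's between the n-th and (n+1)-th occurrence of 1 in the fixed point σ^∞(1), then for all n ≥ 1 written as n = 2^k(2j+1), one has μ_n = l_2·(l_3^k − 1)/(l_3 − 1) + l_1·l_3^k. -/

import Mathlib

/-- The Cantor-like substitution σ : 1 ↦ 1 0^{l₁} 1 0^{l₂}, 0 ↦ 0^{l₃}. -/
def cantorSub (l1 l2 l3 : ℕ) : ℕ → List ℕ :=
  fun a => if a = 1 then 1 :: (List.replicate l1 0 ++ 1 :: List.replicate l2 0)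
           else List.replicate l3 0

/-- σ^m(1). -/
def cantorWord (l1 l2 l3 : ℕ) (m : ℕ) : List ℕ :=
  (fun w => w.flatMap (cantorSub l1 l2 l3))^[m] [1]

/-- The fixed point c = σ^∞(1): since σ^m(1) is a prefix of σ^{m+1}(1) and
    |σ^{n+1}(1)| > n, the n-th letter of c is the n-th letter of σ^{n+1}(1). -/
def cantorSeq (l1 l2 l3 : ℕ) (n : ℕ) : ℕ :=
  (cantorWord l1 l2 l3 (n + 1)).getD n 0

/-- The gap (number of zeros) between the n-th and (n+1)-th one (1-indexed n). -/
def cGap (l1 l2 l3 : ℕ) : ℕ → ℕ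
  | 0 => 0
  | (m+1) => if m % 2 = 0 then l1 else l2 + l3 * cGap l1 l2 l3 ((m+1)/2)
  decreasing_by omega

/-- The block starting at the (n+1)-th one. -/
def cBlock (l1 l2 l3 : ℕ) (n : ℕ) : List ℕ :=
  1 :: List.replicate (cGap l1 l2 l3 (n+1)) 0

def cJoin (l1 l2 l3 : ℕ) (n : ℕ) : List ℕ :=
  (List.range n).flatMap (cBlock l1 l2 l3)

/-- Position of the (n+1)-th one. -/
def cPos (l1 l2 l3 : ℕ) (n : ℕ) : ℕ := (cJoin l1 l2 l3 n).length

section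
variable (l1 l2 l3 : ℕ)

lemma cGap_odd (n : ℕ) : cGap l1 l2 l3 (2*n+1) = l1 := by
  rw [cGap]; simp [Nat.mul_mod_right]

lemma cGap_even (n : ℕ) : cGap l1 l2 l3 (2*n+2) = l2 + l3 * cGap l1 l2 l3 (n+1) := by
  rw [show 2*n+2 = (2*n+1)+1 from rfl, cGap]
  have h1 : (2*n+1) % 2 = 1 := by omega
  have h2 : (2*n+1+1)/2 = n+1 := by omega
  rw [h1, h2]; simp

lemma cGap_formula (k j : ℕ) :
    cGap l1 l2 l3 (2^k * (2*j+1)) = l2 * (∑ i ∈ Finset.range k, l3 ^ i) + l1 * l3 ^ k := by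
  induction k with
  | zero => simp [cGap_odd]
  | succ k ih =>
      have hM : 1 ≤ 2^k * (2*j+1) := Nat.one_le_iff_ne_zero.2 (by positivity)
      have hrw : 2^(k+1) * (2*j+1) = 2*(2^k * (2*j+1) - 1) + 2 := by
        have h : 2^(k+1) * (2*j+1) = 2*(2^k * (2*j+1)) := by ring
        omega
      rw [hrw, cGap_even, Nat.sub_add_cancel hM, ih, geom_sum_succ]
      ring

lemma cJoin_succ (n : ℕ) : cJoin l1 l2 l3 (n+1) = cJoin l1 l2 l3 n ++ cBlock l1 l2 l3 n := by
  simp [cJoin, List.range_succ]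

lemma cPos_succ (n : ℕ) : cPos l1 l2 l3 (n+1) = cPos l1 l2 l3 n + (cGap l1 l2 l3 (n+1) + 1) := by
  simp [cPos, cJoin_succ, cBlock]

lemma cPos_zero : cPos l1 l2 l3 0 = 0 := rfl

lemma cPos_mono : StrictMono (cPos l1 l2 l3) := by
  apply strictMono_nat_of_lt_succ
  intro n; rw [cPos_succ]; omega

lemma le_cPos (n : ℕ) : n ≤ cPos l1 l2 l3 n := by
  induction n with
  | zero => simp
  | succ n ih => rw [cPos_succ]; omega

lemma sub_one_eq : cantorSub l1 l2 l3 1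
    = 1 :: (List.replicate l1 0 ++ 1 :: List.replicate l2 0) := by simp [cantorSub]

lemma sub_zero_eq : cantorSub l1 l2 l3 0 = List.replicate l3 0 := by simp [cantorSub]

lemma flatMap_zeros (r : ℕ) :
    (List.replicate r 0).flatMap (cantorSub l1 l2 l3) = List.replicate (l3 * r) 0 := by
  induction r with
  | zero => simp
  | succ r ih =>
      rw [List.replicate_succ, List.flatMap_cons, ih, sub_zero_eq,
        show l3 * (r+1) = l3 + l3 * r by ring, List.replicate_add]

lemma flatMap_block (n : ℕ) :
    (cBlock l1 l2 l3 n).flatMap (cantorSub l1 l2 l3)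
      = cBlock l1 l2 l3 (2*n) ++ cBlock l1 l2 l3 (2*n+1) := by
  rw [cBlock, List.flatMap_cons, flatMap_zeros, sub_one_eq]
  rw [cBlock, cBlock, cGap_odd, show 2*n+1+1 = 2*n+2 from rfl, cGap_even,
    List.replicate_add]
  simp

lemma flatMap_cJoin (n : ℕ) :
    (cJoin l1 l2 l3 n).flatMap (cantorSub l1 l2 l3) = cJoin l1 l2 l3 (2*n) := by
  induction n with
  | zero => simp [cJoin]
  | succ n ih =>
      rw [cJoin_succ, List.flatMap_append, ih, flatMap_block,
        show 2*(n+1) = (2*n+1)+1 from rfl, cJoin_succ, cJoin_succ, List.append_assoc]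

lemma word_eq (m : ℕ) :
    cantorWord l1 l2 l3 m = cJoin l1 l2 l3 (2^m - 1)
      ++ 1 :: List.replicate (l2 * ∑ i ∈ Finset.range m, l3 ^ i) 0 := by
  induction m with
  | zero => simp [cantorWord, cJoin]
  | succ m ih =>
      have hw : cantorWord l1 l2 l3 (m+1)
          = (cantorWord l1 l2 l3 m).flatMap (cantorSub l1 l2 l3) := by
        rw [cantorWord, cantorWord, Function.iterate_succ_apply']
      rw [hw, ih, List.flatMap_append, flatMap_cJoin, List.flatMap_cons, flatMap_zeros,
        sub_one_eq]
      have h1 : 1 ≤ 2^m := Nat.one_le_two_pow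
      have h2 : 2^(m+1) - 1 = (2*(2^m - 1)) + 1 := by rw [pow_succ]; omega
      rw [h2, cJoin_succ, cBlock, cGap_odd]
      rw [geom_sum_succ, show l2 * (l3 * (∑ i ∈ Finset.range m, l3 ^ i) + 1)
          = l2 + l3 * (l2 * ∑ i ∈ Finset.range m, l3 ^ i) by ring, List.replicate_add]
      simp

lemma cJoin_prefix {a b : ℕ} (h : a ≤ b) : cJoin l1 l2 l3 a <+: cJoin l1 l2 l3 b := by
  induction b with
  | zero =>
      have : a = 0 := by omega
      subst this; exact List.prefix_rfl
  | succ b ih =>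
      rcases Nat.lt_or_ge a (b+1) with hb | hb
      · exact (ih (by omega)).trans (by rw [cJoin_succ]; exact List.prefix_append _ _)
      · have : a = b + 1 := by omega
        subst this; exact List.prefix_rfl

lemma word_prefix (m : ℕ) : cantorWord l1 l2 l3 m <+: cJoin l1 l2 l3 (2^m) := by
  have h1 : 1 ≤ 2^m := Nat.one_le_two_pow
  have h2 : 2^m = (2^m - 1) + 1 := by omega
  rw [word_eq, h2, cJoin_succ, cBlock, Nat.sub_add_cancel h1]
  have h3 : cGap l1 l2 l3 (2^m) = l2 * (∑ i ∈ Finset.range m, l3 ^ i) + l1 * l3 ^ m := by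
    have := cGap_formula l1 l2 l3 m 0
    simpa using this
  refine ⟨List.replicate (l1 * l3 ^ m) 0, ?_⟩
  rw [h3, List.replicate_add]
  simp

lemma getD_of_prefix {w w' : List ℕ} (h : w <+: w') {i : ℕ} (hi : i < w.length) :
    w'.getD i 0 = w.getD i 0 := by
  rw [List.getD_eq_getElem _ _ hi, List.getD_eq_getElem _ _ (hi.trans_le h.length_le),
    h.getElem hi]

lemma word_length (m : ℕ) : 2^m ≤ (cantorWord l1 l2 l3 m).length := by
  rw [word_eq]
  have h1 : 1 ≤ 2^m := Nat.one_le_two_pow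
  have := le_cPos l1 l2 l3 (2^m - 1)
  simp only [List.length_append, List.length_cons]
  have : cPos l1 l2 l3 (2^m - 1) = (cJoin l1 l2 l3 (2^m -1)).length := rfl
  omega

lemma seq_eq_cJoin {i n : ℕ} (hi : i < cPos l1 l2 l3 n) :
    cantorSeq l1 l2 l3 i = (cJoin l1 l2 l3 n).getD i 0 := by
  set M := max n (2^(i+1)) with hM
  have h1 : cantorWord l1 l2 l3 (i+1) <+: cJoin l1 l2 l3 M :=
    (word_prefix l1 l2 l3 (i+1)).trans (cJoin_prefix l1 l2 l3 (le_max_right _ _))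
  have h2 : cJoin l1 l2 l3 n <+: cJoin l1 l2 l3 M := cJoin_prefix l1 l2 l3 (le_max_left _ _)
  have hlen : i < (cantorWord l1 l2 l3 (i+1)).length := by
    have := word_length l1 l2 l3 (i+1)
    have := Nat.lt_two_pow_self (n := i+1)
    omega
  rw [cantorSeq, ← getD_of_prefix h1 hlen, getD_of_prefix h2 hi]

lemma seq_one (m : ℕ) : cantorSeq l1 l2 l3 (cPos l1 l2 l3 m) = 1 := by
  have h : cPos l1 l2 l3 m < cPos l1 l2 l3 (m+1) := cPos_mono l1 l2 l3 (by omega)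
  have hl : (cJoin l1 l2 l3 m).length = cPos l1 l2 l3 m := rfl
  rw [seq_eq_cJoin l1 l2 l3 h, cJoin_succ, ← hl,
    List.getD_append_right _ _ _ _ (le_refl _)]
  simp [cBlock]

lemma getD_replicate_zero (r k : ℕ) : (List.replicate r (0:ℕ)).getD k 0 = 0 := by
  rcases Nat.lt_or_ge k r with h | h
  · rw [List.getD_eq_getElem _ _ (by simpa using h), List.getElem_replicate]
  · exact List.getD_eq_default _ _ (by simpa using h)

lemma seq_zero {i : ℕ} (h : ∀ m, cPos l1 l2 l3 m ≠ i) : cantorSeq l1 l2 l3 i = 0 := by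
  have hi : i < cPos l1 l2 l3 (i+1) := lt_of_lt_of_le (by omega) (le_cPos l1 l2 l3 (i+1))
  rw [seq_eq_cJoin l1 l2 l3 hi]
  clear hi
  have key : ∀ n, i < cPos l1 l2 l3 n → (cJoin l1 l2 l3 n).getD i 0 = 0 := by
    intro n
    induction n with
    | zero => intro hc; simp [cPos_zero] at hc
    | succ n ih =>
        intro hc
        rcases Nat.lt_or_ge i (cPos l1 l2 l3 n) with hlt | hge
        · rw [getD_of_prefix (cJoin_prefix l1 l2 l3 (Nat.le_succ n)) hlt]
          exact ih hlt
        · have hne : cPos l1 l2 l3 n < i := lt_of_le_of_ne hge (h n)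
          rw [cJoin_succ, List.getD_append_right _ _ _ _ hge]
          have : i - (cJoin l1 l2 l3 n).length = (i - cPos l1 l2 l3 n - 1) + 1 := by
            have : (cJoin l1 l2 l3 n).length = cPos l1 l2 l3 n := rfl
            omega
          rw [this, cBlock, List.getD_cons_succ, getD_replicate_zero]
  exact key (i+1) (lt_of_lt_of_le (by omega) (le_cPos l1 l2 l3 (i+1)))

lemma seq_one_iff (i : ℕ) : cantorSeq l1 l2 l3 i = 1 ↔ ∃ m, cPos l1 l2 l3 m = i := by
  constructor
  · intro h
    by_contra hc
    push_neg at hc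
    rw [seq_zero l1 l2 l3 hc] at h
    exact one_ne_zero h.symm
  · rintro ⟨m, rfl⟩
    exact seq_one l1 l2 l3 m

lemma nth_eq (n : ℕ) :
    Nat.nth (fun i => cantorSeq l1 l2 l3 i = 1) n = cPos l1 l2 l3 n := by
  have hp : cantorSeq l1 l2 l3 (cPos l1 l2 l3 n) = 1 := seq_one l1 l2 l3 n
  have h := Nat.nth_count (p := fun i => cantorSeq l1 l2 l3 i = 1) hp
  have hc : Nat.count (fun i => cantorSeq l1 l2 l3 i = 1) (cPos l1 l2 l3 n) = n := by
    rw [Nat.count_eq_card_filter_range]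
    have himg : (Finset.range (cPos l1 l2 l3 n)).filter (fun i => cantorSeq l1 l2 l3 i = 1)
        = (Finset.range n).image (cPos l1 l2 l3) := by
      ext i
      simp only [Finset.mem_filter, Finset.mem_range, Finset.mem_image, seq_one_iff]
      constructor
      · rintro ⟨hi, m, rfl⟩
        exact ⟨m, (cPos_mono l1 l2 l3).lt_iff_lt.1 hi, rfl⟩
      · rintro ⟨m, hm, rfl⟩
        exact ⟨cPos_mono l1 l2 l3 hm, m, rfl⟩
    rw [himg, Finset.card_image_of_injective _ (cPos_mono l1 l2 l3).injective,
      Finset.card_range]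
  rw [hc] at h
  exact h

end

theorem stmt3 (l1 l2 l3 : ℕ) (hl3 : 3 ≤ l3) (k j : ℕ) :
    ((Finset.Ioo
        (Nat.nth (fun i => cantorSeq l1 l2 l3 i = 1) (2 ^ k * (2 * j + 1) - 1))
        (Nat.nth (fun i => cantorSeq l1 l2 l3 i = 1) (2 ^ k * (2 * j + 1)))).filter
        (fun i => cantorSeq l1 l2 l3 i = 0)).card
      = l2 * (∑ i ∈ Finset.range k, l3 ^ i) + l1 * l3 ^ k := by
  have hN : 1 ≤ 2^k * (2*j+1) := Nat.one_le_iff_ne_zero.2 (by positivity)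
  rw [nth_eq, nth_eq]
  set N := 2^k * (2*j+1) with hNdef
  have hsucc : cPos l1 l2 l3 N = cPos l1 l2 l3 (N-1) + (cGap l1 l2 l3 N + 1) := by
    have := cPos_succ l1 l2 l3 (N-1)
    rwa [Nat.sub_add_cancel hN] at this
  have hfilter : (Finset.Ioo (cPos l1 l2 l3 (N-1)) (cPos l1 l2 l3 N)).filter
      (fun i => cantorSeq l1 l2 l3 i = 0)
      = Finset.Ioo (cPos l1 l2 l3 (N-1)) (cPos l1 l2 l3 N) := by
    apply Finset.filter_true_of_mem
    intro i hi
    rw [Finset.mem_Ioo] at hi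
    apply seq_zero
    intro m hm
    rw [← hm] at hi
    have h1 := (cPos_mono l1 l2 l3).lt_iff_lt.1 hi.1
    have h2 := (cPos_mono l1 l2 l3).lt_iff_lt.1 hi.2
    omega
  rw [hfilter, Nat.card_Ioo, hsucc]
  have hg := cGap_formula l1 l2 l3 k j
  rw [← hNdef] at hg
  omega
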